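/- Lower semi-continuity of the nonlocal capacity: if (E_j)_{j∈ℕ} is an increasing sequence of subsets of ℝ^d, then Cap_{ν,p}(⋃_{j=1}^∞ E_j) = lim_{j→∞} Cap_{ν,p}(E_j). -/

import Mathlib

open MeasureTheory ENNReal Set Filter Topology

/-- The nonlocal Sobolev seminorm `[f]_{W_p^ν}` (as an extended nonnegative real):
`[f]_{W_p^ν} = (∫∫ |f(x+h)-f(x)|^p dx ν(dh))^(1/p)`. -/
noncomputable def nlSeminorm (d : ℕ) (p : ℝ) (ν : Measure (EuclideanSpace ℝ (Fin d)))
    (f : EuclideanSpace ℝ (Fin d) → ℝ) : ℝ≥0∞ :=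
  (∫⁻ h, (∫⁻ x, ENNReal.ofReal (|f (x + h) - f x| ^ p)) ∂ν) ^ (1 / p)

/-- The nonlocal Sobolev norm `‖f‖_{W_p^ν} = ‖f‖_{L^p} + [f]_{W_p^ν}`. -/
noncomputable def nlNorm (d : ℕ) (p : ℝ) (ν : Measure (EuclideanSpace ℝ (Fin d)))
    (f : EuclideanSpace ℝ (Fin d) → ℝ) : ℝ≥0∞ :=
  (∫⁻ x, ENNReal.ofReal (|f x| ^ p)) ^ (1 / p) + nlSeminorm d p ν f

/-- Membership in the nonlocal Sobolev space `W_p^ν`. -/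
def memW (d : ℕ) (p : ℝ) (ν : Measure (EuclideanSpace ℝ (Fin d)))
    (f : EuclideanSpace ℝ (Fin d) → ℝ) : Prop :=
  Measurable f ∧ nlNorm d p ν f < ⊤

/-- The `W_p^ν`-capacity of a set `E ⊆ ℝ^d`:
`Cap_{ν,p}(E) = inf { ‖f‖_{W_p^ν}^p : f ∈ W_p^ν, E ⊆ int {f ≥ 1} }`. -/
noncomputable def capNu (d : ℕ) (p : ℝ) (ν : Measure (EuclideanSpace ℝ (Fin d)))
    (E : Set (EuclideanSpace ℝ (Fin d))) : ℝ≥0∞ :=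
  ⨅ (f : EuclideanSpace ℝ (Fin d) → ℝ)
    (_ : memW d p ν f ∧ E ⊆ interior {x | 1 ≤ f x}), nlNorm d p ν f ^ p


-- convex endpoint bound for rpow
lemma rpow_endpoint {p : ℝ} (hp : 1 ≤ p) {u v a b : ℝ} (hu : 0 ≤ u) (ha : u ≤ a) (hav : a ≤ v)
    (hb : u ≤ b) (hbv : b ≤ v) (hab : a + b = u + v) :
    a ^ p + b ^ p ≤ u ^ p + v ^ p := by
  rcases eq_or_lt_of_le (ha.trans hav) with h | huv
  · have h1 : a = u := le_antisymm (by linarith) ha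
    have h2 : b = v := by linarith
    rw [h1, h2]
  · set θ : ℝ := (v - a) / (v - u) with hθ
    have hvu : 0 < v - u := by linarith
    have hθ0 : 0 ≤ θ := div_nonneg (by linarith) hvu.le
    have hθ1 : θ ≤ 1 := (div_le_one hvu).2 (by linarith)
    have hA : a = θ * u + (1 - θ) * v := by
      have hθm : θ * (v - u) = v - a := by rw [hθ]; exact div_mul_cancel₀ _ hvu.ne'
      linear_combination hθm
    have hB : b = (1 - θ) * u + θ * v := by
      have hθm : θ * (v - u) = v - a := by rw [hθ]; exact div_mul_cancel₀ _ hvu.ne'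
      linear_combination hab - hθm
    have hcv := convexOn_rpow hp
    have h1 : a ^ p ≤ θ * u ^ p + (1 - θ) * v ^ p := by
      have := hcv.2 (mem_Ici.2 hu) (mem_Ici.2 (by linarith : (0:ℝ) ≤ v)) hθ0 (by linarith)
        (by ring : θ + (1 - θ) = 1)
      simpa [← hA] using this
    have h2 : b ^ p ≤ (1 - θ) * u ^ p + θ * v ^ p := by
      have := hcv.2 (mem_Ici.2 hu) (mem_Ici.2 (by linarith : (0:ℝ) ≤ v)) (by linarith : (0:ℝ) ≤ 1 - θ)
        hθ0 (by ring : (1 - θ) + θ = 1)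
      simpa [← hB] using this
    nlinarith [h1, h2]

-- the weak-majorization rpow inequality
lemma rpow_pair_le {p : ℝ} (hp : 1 ≤ p) {u v s t : ℝ} (hu0 : 0 ≤ u) (hv0 : 0 ≤ v)
    (hs0 : 0 ≤ s) (ht0 : 0 ≤ t) (hu : u ≤ max s t) (hv : v ≤ max s t) (huv : u + v ≤ s + t) :
    u ^ p + v ^ p ≤ s ^ p + t ^ p := by
  have hp0 : 0 ≤ p := by linarith
  -- wlog t ≤ s and v ≤ u
  rcases le_total t s with hts | hts
  · rcases le_total v u with hvu | hvu
    · -- core case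
      have hus : u ≤ s := by simpa [max_eq_left hts] using hu
      rcases le_total u t with hut | hut
      · have h1 : u ^ p ≤ s ^ p := Real.rpow_le_rpow hu0 hus hp0
        have h2 : v ^ p ≤ t ^ p := Real.rpow_le_rpow hv0 (hvu.trans hut) hp0
        linarith
      · have hv' : v ≤ s + t - u := by linarith
        have h2 : v ^ p ≤ (s + t - u) ^ p := Real.rpow_le_rpow hv0 hv' hp0
        have h3 : u ^ p + (s + t - u) ^ p ≤ t ^ p + s ^ p := by
          refine rpow_endpoint hp ht0 hut hus (by linarith) (by linarith) (by ring)
        linarith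
    · -- swap u v
      have hus : v ≤ s := by simpa [max_eq_left hts] using hv
      rcases le_total v t with hut | hut
      · have h1 : v ^ p ≤ s ^ p := Real.rpow_le_rpow hv0 hus hp0
        have h2 : u ^ p ≤ t ^ p := Real.rpow_le_rpow hu0 (hvu.trans hut) hp0
        linarith
      · have hv' : u ≤ s + t - v := by linarith
        have h2 : u ^ p ≤ (s + t - v) ^ p := Real.rpow_le_rpow hu0 hv' hp0
        have h3 : v ^ p + (s + t - v) ^ p ≤ t ^ p + s ^ p := by
          refine rpow_endpoint hp ht0 hut hus (by linarith) (by linarith) (by ring)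
        linarith
  · -- t ≥ s : swap s t
    rcases le_total v u with hvu | hvu
    · have hus : u ≤ t := by simpa [max_eq_right hts] using hu
      rcases le_total u s with hut | hut
      · have h1 : u ^ p ≤ t ^ p := Real.rpow_le_rpow hu0 hus hp0
        have h2 : v ^ p ≤ s ^ p := Real.rpow_le_rpow hv0 (hvu.trans hut) hp0
        linarith
      · have hv' : v ≤ s + t - u := by linarith
        have h2 : v ^ p ≤ (s + t - u) ^ p := Real.rpow_le_rpow hv0 hv' hp0
        have h3 : u ^ p + (s + t - u) ^ p ≤ s ^ p + t ^ p := by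
          refine rpow_endpoint hp hs0 hut hus (by linarith) (by linarith) (by ring)
        linarith
    · have hus : v ≤ t := by simpa [max_eq_right hts] using hv
      rcases le_total v s with hut | hut
      · have h1 : v ^ p ≤ t ^ p := Real.rpow_le_rpow hv0 hus hp0
        have h2 : u ^ p ≤ s ^ p := Real.rpow_le_rpow hu0 (hvu.trans hut) hp0
        linarith
      · have hv' : u ≤ s + t - v := by linarith
        have h2 : u ^ p ≤ (s + t - v) ^ p := Real.rpow_le_rpow hu0 hv' hp0
        have h3 : v ^ p + (s + t - v) ^ p ≤ s ^ p + t ^ p := by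
          refine rpow_endpoint hp hs0 hut hus (by linarith) (by linarith) (by ring)
        linarith

lemma abs_pair_sum (a b c d : ℝ) :
    |max a b - max c d| + |min a b - min c d| ≤ |a - c| + |b - d| := by
  rcases le_total a b with h1 | h1 <;> rcases le_total c d with h2 | h2 <;>
    simp only [max_eq_right, max_eq_left, min_eq_left, min_eq_right, h1, h2] <;>
    [skip; skip; skip; skip] <;>
    rcases abs_cases (a - c) with ⟨e1, f1⟩ | ⟨e1, f1⟩ <;>
    rcases abs_cases (b - d) with ⟨e2, f2⟩ | ⟨e2, f2⟩ <;>
    rcases abs_cases (a - d) with ⟨e3, f3⟩ | ⟨e3, f3⟩ <;>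
    rcases abs_cases (b - c) with ⟨e4, f4⟩ | ⟨e4, f4⟩ <;>
    simp only [e1, e2, e3, e4] <;> linarith

lemma pointwise_minmax {p : ℝ} (hp : 1 ≤ p) (a b c d : ℝ) :
    |max a b - max c d| ^ p + |min a b - min c d| ^ p ≤ |a - c| ^ p + |b - d| ^ p :=
  rpow_pair_le hp (abs_nonneg _) (abs_nonneg _) (abs_nonneg _) (abs_nonneg _)
    (abs_max_sub_max_le_max a b c d) (abs_min_sub_min_le_max a b c d) (abs_pair_sum a b c d)

lemma pointwise_abs_minmax (p : ℝ) (a b : ℝ) :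
    |max a b| ^ p + |min a b| ^ p = |a| ^ p + |b| ^ p := by
  rcases le_total a b with h | h <;>
    simp [max_eq_right, max_eq_left, min_eq_left, min_eq_right, h] <;> ring

section Cap

variable (d : ℕ) (p : ℝ) (ν : Measure (EuclideanSpace ℝ (Fin d)))

/-- the `L^p` part of the energy, as a raw integral -/
noncomputable def AA (f : EuclideanSpace ℝ (Fin d) → ℝ) : ℝ≥0∞ :=
  ∫⁻ x, ENNReal.ofReal (|f x| ^ p)

/-- the seminorm part of the energy, as a raw double integral -/
noncomputable def BB (f : EuclideanSpace ℝ (Fin d) → ℝ) : ℝ≥0∞ :=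
  ∫⁻ h, (∫⁻ x, ENNReal.ofReal (|f (x + h) - f x| ^ p)) ∂ν

lemma nlNorm_eq (f : EuclideanSpace ℝ (Fin d) → ℝ) :
    nlNorm d p ν f = AA d p f ^ (1 / p) + BB d p ν f ^ (1 / p) := rfl

variable {d p ν}

lemma meas_ofReal_rpow (hp : 0 ≤ p) {α : Type*} [MeasurableSpace α] {g : α → ℝ}
    (hg : Measurable g) : Measurable fun x => ENNReal.ofReal (|g x| ^ p) :=
  ENNReal.continuous_ofReal.measurable.comp
    (((Real.continuous_rpow_const hp).measurable).comp hg.abs)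

lemma meas_pair {f : EuclideanSpace ℝ (Fin d) → ℝ} (hf : Measurable f) :
    Measurable fun q : EuclideanSpace ℝ (Fin d) × EuclideanSpace ℝ (Fin d) =>
      f (q.2 + q.1) - f q.2 :=
  ((hf.comp (measurable_snd.add measurable_fst)).sub (hf.comp measurable_snd))

lemma meas_innerB (hp : 0 ≤ p) {f : EuclideanSpace ℝ (Fin d) → ℝ} (hf : Measurable f) :
    Measurable fun h : EuclideanSpace ℝ (Fin d) =>
      ∫⁻ x, ENNReal.ofReal (|f (x + h) - f x| ^ p) := by
  apply Measurable.lintegral_prod_right'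
    (f := fun q : EuclideanSpace ℝ (Fin d) × EuclideanSpace ℝ (Fin d) =>
      ENNReal.ofReal (|f (q.2 + q.1) - f q.2| ^ p))
  exact ENNReal.continuous_ofReal.measurable.comp
    (((Real.continuous_rpow_const hp).measurable).comp (meas_pair hf).abs)

lemma meas_shift (hp : 0 ≤ p) {f : EuclideanSpace ℝ (Fin d) → ℝ} (hf : Measurable f)
    (h : EuclideanSpace ℝ (Fin d)) :
    Measurable fun x => ENNReal.ofReal (|f (x + h) - f x| ^ p) :=
  meas_ofReal_rpow hp ((hf.comp (measurable_add_const h)).sub hf)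

lemma AA_submod (hp : 1 ≤ p) {f g : EuclideanSpace ℝ (Fin d) → ℝ} (hf : Measurable f)
    (hg : Measurable g) :
    AA d p (fun x => max (f x) (g x)) + AA d p (fun x => min (f x) (g x)) =
      AA d p f + AA d p g := by
  have hp0 : (0:ℝ) ≤ p := by linarith
  unfold AA
  rw [← lintegral_add_left (meas_ofReal_rpow hp0 (hf.max hg)),
    ← lintegral_add_left (meas_ofReal_rpow hp0 hf)]
  congr 1
  ext x
  rw [← ENNReal.ofReal_add (by positivity) (by positivity),
    ← ENNReal.ofReal_add (by positivity) (by positivity)]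
  exact congrArg ENNReal.ofReal (pointwise_abs_minmax p (f x) (g x))

lemma BB_submod (hp : 1 ≤ p) {f g : EuclideanSpace ℝ (Fin d) → ℝ} (hf : Measurable f)
    (hg : Measurable g) :
    BB d p ν (fun x => max (f x) (g x)) + BB d p ν (fun x => min (f x) (g x)) ≤
      BB d p ν f + BB d p ν g := by
  have hp0 : (0:ℝ) ≤ p := by linarith
  unfold BB
  rw [← lintegral_add_left (meas_innerB hp0 (hf.max hg)),
    ← lintegral_add_left (meas_innerB hp0 hf)]
  refine lintegral_mono fun h => ?_
  rw [← lintegral_add_left (meas_shift hp0 (hf.max hg) h),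
    ← lintegral_add_left (meas_shift hp0 hf h)]
  refine lintegral_mono fun x => ?_
  rw [← ENNReal.ofReal_add (by positivity) (by positivity),
    ← ENNReal.ofReal_add (by positivity) (by positivity)]
  exact ENNReal.ofReal_le_ofReal (pointwise_minmax hp (f (x+h)) (g (x+h)) (f x) (g x))

variable (d p ν) in
/-- generalized energy -/
noncomputable def Gc (c₁ c₂ : ℝ≥0∞) (f : EuclideanSpace ℝ (Fin d) → ℝ) : ℝ≥0∞ :=
  c₁ * AA d p f + c₂ * BB d p ν f

variable (d p ν) in
/-- admissible functions -/
def Adm (E : Set (EuclideanSpace ℝ (Fin d))) (f : EuclideanSpace ℝ (Fin d) → ℝ) : Prop :=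
  memW d p ν f ∧ E ⊆ interior {x | 1 ≤ f x}

variable (d p ν) in
/-- generalized capacity -/
noncomputable def capGen (c₁ c₂ : ℝ≥0∞) (E : Set (EuclideanSpace ℝ (Fin d))) : ℝ≥0∞ :=
  ⨅ (f : EuclideanSpace ℝ (Fin d) → ℝ) (_ : Adm d p ν E f), Gc d p ν c₁ c₂ f

lemma capNu_eq_inf (E : Set (EuclideanSpace ℝ (Fin d))) :
    capNu d p ν E = ⨅ (f : EuclideanSpace ℝ (Fin d) → ℝ) (_ : Adm d p ν E f),
      nlNorm d p ν f ^ p := rfl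

lemma capGen_mono (c₁ c₂ : ℝ≥0∞) {E F : Set (EuclideanSpace ℝ (Fin d))} (hEF : E ⊆ F) :
    capGen d p ν c₁ c₂ E ≤ capGen d p ν c₁ c₂ F :=
  le_iInf₂ fun f hf => iInf₂_le f ⟨hf.1, hEF.trans hf.2⟩

lemma capNu_mono {E F : Set (EuclideanSpace ℝ (Fin d))} (hEF : E ⊆ F) :
    capNu d p ν E ≤ capNu d p ν F :=
  le_iInf₂ fun f hf => iInf₂_le (α := ℝ≥0∞) f ⟨hf.1, hEF.trans hf.2⟩

lemma memW_iff (hp : 1 ≤ p) {f : EuclideanSpace ℝ (Fin d) → ℝ} (hf : Measurable f) :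
    memW d p ν f ↔ AA d p f < ⊤ ∧ BB d p ν f < ⊤ := by
  have hp0 : 0 < p := by linarith
  have h1p : 0 < 1 / p := by positivity
  rw [memW, nlNorm_eq]
  simp only [hf, true_and, ENNReal.add_lt_top,
    ENNReal.rpow_lt_top_iff_of_pos h1p]

lemma AB_lt_top_of_Gc {c₁ c₂ : ℝ≥0∞} (hc₁ : c₁ ≠ 0) (hc₂ : c₂ ≠ 0)
    {f : EuclideanSpace ℝ (Fin d) → ℝ} (hG : Gc d p ν c₁ c₂ f < ⊤) :
    AA d p f < ⊤ ∧ BB d p ν f < ⊤ := by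
  constructor
  · refine lt_top_iff_ne_top.2 fun hA => ?_
    rw [Gc, hA, ENNReal.mul_top hc₁, top_add] at hG
    exact absurd hG (by simp)
  · refine lt_top_iff_ne_top.2 fun hB => ?_
    rw [Gc, hB, ENNReal.mul_top hc₂, add_top] at hG
    exact absurd hG (by simp)

lemma Gc_submod (hp : 1 ≤ p) (c₁ c₂ : ℝ≥0∞) {f g : EuclideanSpace ℝ (Fin d) → ℝ}
    (hf : Measurable f) (hg : Measurable g) :
    Gc d p ν c₁ c₂ (fun x => max (f x) (g x)) + Gc d p ν c₁ c₂ (fun x => min (f x) (g x)) ≤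
      Gc d p ν c₁ c₂ f + Gc d p ν c₁ c₂ g := by
  have hA := AA_submod hp hf hg
  have hB := BB_submod (ν := ν) hp hf hg
  unfold Gc
  calc c₁ * AA d p (fun x => max (f x) (g x)) + c₂ * BB d p ν (fun x => max (f x) (g x)) +
      (c₁ * AA d p (fun x => min (f x) (g x)) + c₂ * BB d p ν (fun x => min (f x) (g x)))
      = c₁ * (AA d p (fun x => max (f x) (g x)) + AA d p (fun x => min (f x) (g x))) +
        c₂ * (BB d p ν (fun x => max (f x) (g x)) + BB d p ν (fun x => min (f x) (g x))) := by
        ring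
    _ ≤ c₁ * (AA d p f + AA d p g) + c₂ * (BB d p ν f + BB d p ν g) :=
        add_le_add (mul_le_mul_right hA.le c₁) (mul_le_mul_right hB c₂)
    _ = c₁ * AA d p f + c₂ * BB d p ν f + (c₁ * AA d p g + c₂ * BB d p ν g) := by ring

/-- clamp to [0,1] -/
def clampF (f : EuclideanSpace ℝ (Fin d) → ℝ) : EuclideanSpace ℝ (Fin d) → ℝ :=
  fun x => min (max (f x) 0) 1

lemma clampF_meas {f : EuclideanSpace ℝ (Fin d) → ℝ} (hf : Measurable f) :
    Measurable (clampF f) := (hf.max measurable_const).min measurable_const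

lemma clampF_nonneg (f : EuclideanSpace ℝ (Fin d) → ℝ) (x) : 0 ≤ clampF f x :=
  le_min (le_max_right _ _) zero_le_one

lemma clampF_le_one (f : EuclideanSpace ℝ (Fin d) → ℝ) (x) : clampF f x ≤ 1 :=
  min_le_right _ _

lemma clampF_abs_le (f : EuclideanSpace ℝ (Fin d) → ℝ) (x) : |clampF f x| ≤ |f x| := by
  rw [abs_of_nonneg (clampF_nonneg f x)]
  rcases le_total (f x) 0 with h | h
  · simp [clampF, max_eq_right h]
  · calc clampF f x ≤ max (f x) 0 := min_le_left _ _
      _ = f x := max_eq_left h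
      _ ≤ |f x| := le_abs_self _

lemma clampF_diff_le (f : EuclideanSpace ℝ (Fin d) → ℝ) (x y) :
    |clampF f x - clampF f y| ≤ |f x - f y| := by
  have h1 : |clampF f x - clampF f y| ≤ max |max (f x) 0 - max (f y) 0| |(1:ℝ) - 1| :=
    abs_min_sub_min_le_max _ _ _ _
  have h2 : |max (f x) 0 - max (f y) 0| ≤ max |f x - f y| |(0:ℝ) - 0| :=
    abs_max_sub_max_le_max _ _ _ _
  simp only [sub_self, abs_zero] at h1 h2
  have e1 : max |max (f x) 0 - max (f y) 0| (0:ℝ) = |max (f x) 0 - max (f y) 0| :=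
    max_eq_left (abs_nonneg _)
  have e2 : max |f x - f y| (0:ℝ) = |f x - f y| := max_eq_left (abs_nonneg _)
  rw [e1] at h1
  rw [e2] at h2
  exact h1.trans h2

lemma one_le_clampF {f : EuclideanSpace ℝ (Fin d) → ℝ} (x) : 1 ≤ clampF f x ↔ 1 ≤ f x := by
  simp [clampF, le_min_iff, le_max_iff]

lemma AA_clampF_le (hp : 0 ≤ p) (f : EuclideanSpace ℝ (Fin d) → ℝ) :
    AA d p (clampF f) ≤ AA d p f :=
  lintegral_mono fun x => ENNReal.ofReal_le_ofReal
    (Real.rpow_le_rpow (abs_nonneg _) (clampF_abs_le f x) hp)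

lemma BB_clampF_le (hp : 0 ≤ p) (f : EuclideanSpace ℝ (Fin d) → ℝ) :
    BB d p ν (clampF f) ≤ BB d p ν f :=
  lintegral_mono fun h => lintegral_mono fun x => ENNReal.ofReal_le_ofReal
    (Real.rpow_le_rpow (abs_nonneg _) (clampF_diff_le f _ _) hp)

lemma Gc_clampF_le (hp : 0 ≤ p) (c₁ c₂ : ℝ≥0∞) (f : EuclideanSpace ℝ (Fin d) → ℝ) :
    Gc d p ν c₁ c₂ (clampF f) ≤ Gc d p ν c₁ c₂ f := by
  unfold Gc
  gcongr
  · exact AA_clampF_le hp f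
  · exact BB_clampF_le hp f

variable (p) in
/-- the coefficient `t ^ (1-p)` as an extended real -/
noncomputable def coefP (t : ℝ) : ℝ≥0∞ := ENNReal.ofReal t ^ (1 - p)

lemma coefP_ne_zero (hp : 1 ≤ p) (t : ℝ) : coefP p t ≠ 0 := by
  rw [coefP, Ne, ENNReal.rpow_eq_zero_iff]
  push_neg
  constructor
  · rintro - 
    linarith
  · rintro h
    exact absurd h ENNReal.ofReal_ne_top

lemma np_le_G (hp : 1 ≤ p) {t : ℝ} (ht0 : 0 ≤ t) (ht1 : t ≤ 1)
    (f : EuclideanSpace ℝ (Fin d) → ℝ) :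
    nlNorm d p ν f ^ p ≤ Gc d p ν (coefP p t) (coefP p (1 - t)) f := by
  have hp0 : (0:ℝ) < p := by linarith
  have hpne : p ≠ 0 := ne_of_gt hp0
  have hrpow_inv : ∀ X : ℝ≥0∞, (X ^ (1/p)) ^ p = X := by
    intro X
    rw [← ENNReal.rpow_mul, one_div_mul_cancel hpne, ENNReal.rpow_one]
  rcases eq_or_lt_of_le ht0 with h0 | h0
  · -- t = 0
    rw [nlNorm_eq, Gc, coefP, coefP, ← h0]
    simp only [sub_zero, ENNReal.ofReal_one, ENNReal.one_rpow, one_mul, ENNReal.ofReal_zero]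
    rcases eq_or_ne (AA d p f) 0 with hA | hA
    · rw [hA, mul_zero, zero_add, ENNReal.zero_rpow_of_pos (y := 1/p) (by positivity), zero_add,
        hrpow_inv]
    · rcases eq_or_lt_of_le hp with hp1 | hp1
      · rw [← hp1]
        norm_num
      · rw [ENNReal.zero_rpow_of_neg (y := 1 - p) (by linarith), ENNReal.top_mul hA, top_add]
        exact le_top
  rcases eq_or_lt_of_le ht1 with h1 | h1
  · -- t = 1
    rw [nlNorm_eq, Gc, coefP, coefP, h1]
    simp only [sub_self, ENNReal.ofReal_one, ENNReal.one_rpow, one_mul, ENNReal.ofReal_zero]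
    rcases eq_or_ne (BB d p ν f) 0 with hB | hB
    · rw [hB, mul_zero, add_zero, ENNReal.zero_rpow_of_pos (y := 1/p) (by positivity), add_zero,
        hrpow_inv]
    · rcases eq_or_lt_of_le hp with hp1 | hp1
      · rw [← hp1]
        norm_num
      · rw [ENNReal.zero_rpow_of_neg (y := 1 - p) (by linarith), ENNReal.top_mul hB, add_top]
        exact le_top
  -- 0 < t < 1
  rw [nlNorm_eq, Gc, coefP, coefP]
  set w₁ : ℝ≥0∞ := ENNReal.ofReal t with hw₁def
  set w₂ : ℝ≥0∞ := ENNReal.ofReal (1 - t) with hw₂def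
  set A := AA d p f with hAdef
  set B := BB d p ν f with hBdef
  have hw₁0 : w₁ ≠ 0 := by simp [w₁, ENNReal.ofReal_eq_zero]; linarith
  have hw₂0 : w₂ ≠ 0 := by simp [w₂, ENNReal.ofReal_eq_zero]; linarith
  have hw₁t : w₁ ≠ ⊤ := ENNReal.ofReal_ne_top
  have hw₂t : w₂ ≠ ⊤ := ENNReal.ofReal_ne_top
  have hw : w₁ + w₂ = 1 := by
    rw [← ENNReal.ofReal_add (by linarith) (by linarith)]
    norm_num
  have key := ENNReal.rpow_arith_mean_le_arith_mean2_rpow w₁ w₂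
    (A ^ (1/p) / w₁) (B ^ (1/p) / w₂) hw hp
  have hz₁ : w₁ * (A ^ (1/p) / w₁) = A ^ (1/p) := ENNReal.mul_div_cancel hw₁0 hw₁t
  have hz₂ : w₂ * (B ^ (1/p) / w₂) = B ^ (1/p) := ENNReal.mul_div_cancel hw₂0 hw₂t
  rw [hz₁, hz₂] at key
  refine key.trans ?_
  have hcalc : ∀ (w : ℝ≥0∞) (X : ℝ≥0∞), w ≠ 0 → w ≠ ⊤ →
      w * (X ^ (1/p) / w) ^ p = w ^ (1 - p) * X := by
    intro w X hw0 hwt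
    rw [ENNReal.div_rpow_of_nonneg _ _ hp0.le, hrpow_inv,
      ENNReal.rpow_sub 1 p hw0 hwt, ENNReal.rpow_one, div_eq_mul_inv, ← ENNReal.rpow_neg,
      div_eq_mul_inv, ← ENNReal.rpow_neg]
    ring
  rw [hcalc w₁ A hw₁0 hw₁t, hcalc w₂ B hw₂0 hw₂t]

lemma const_mul_liminf_le (c : ℝ≥0∞) (u : ℕ → ℝ≥0∞) :
    c * Filter.liminf u Filter.atTop ≤ Filter.liminf (fun n => c * u n) Filter.atTop := by
  rw [Filter.liminf_eq_iSup_iInf_of_nat, Filter.liminf_eq_iSup_iInf_of_nat, ENNReal.mul_iSup]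
  refine iSup_mono fun n => ?_
  exact le_iInf₂ fun i hi => mul_le_mul_right (iInf₂_le i hi) c

lemma liminf_superadd (u v : ℕ → ℝ≥0∞) :
    Filter.liminf u Filter.atTop + Filter.liminf v Filter.atTop ≤
      Filter.liminf (fun n => u n + v n) Filter.atTop := by
  rw [Filter.liminf_eq_iSup_iInf_of_nat, Filter.liminf_eq_iSup_iInf_of_nat,
    Filter.liminf_eq_iSup_iInf_of_nat,
    ENNReal.iSup_add_iSup_of_monotone
      (fun n m hnm => le_iInf₂ fun i hi => iInf₂_le (α := ℝ≥0∞) i (hnm.trans hi))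
      (fun n m hnm => le_iInf₂ fun i hi => iInf₂_le (α := ℝ≥0∞) i (hnm.trans hi))]
  refine iSup_mono fun n => ?_
  exact le_iInf₂ fun i hi => add_le_add (iInf₂_le i hi) (iInf₂_le i hi)

theorem capGen_iUnion_le (hp : 1 ≤ p) {c₁ c₂ : ℝ≥0∞} (hc₁ : c₁ ≠ 0) (hc₂ : c₂ ≠ 0)
    (E : ℕ → Set (EuclideanSpace ℝ (Fin d))) (hinc : Monotone E) :
    capGen d p ν c₁ c₂ (⋃ j, E j) ≤ ⨆ j, capGen d p ν c₁ c₂ (E j) := by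
  have hp0 : (0:ℝ) < p := by linarith
  set S := ⨆ j, capGen d p ν c₁ c₂ (E j) with hSdef
  refine ENNReal.le_of_forall_pos_le_add fun ε hε hS => ?_
  have hSne : S ≠ ⊤ := hS.ne
  have hcaple : ∀ j, capGen d p ν c₁ c₂ (E j) ≤ S := fun j => hSdef ▸ le_iSup (fun j => capGen d p ν c₁ c₂ (E j)) j
  have hcapne : ∀ j, capGen d p ν c₁ c₂ (E j) ≠ ⊤ := fun j => ((hcaple j).trans_lt hS).ne
  set εseq : ℕ → ℝ≥0∞ := fun j => (ε : ℝ≥0∞) * 2⁻¹ ^ (j+1) with hεseq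
  have hεseq0 : ∀ j, εseq j ≠ 0 := by
    intro j
    refine mul_ne_zero (ENNReal.coe_ne_zero.mpr hε.ne') (pow_ne_zero _ ?_)
    exact ENNReal.inv_ne_zero.mpr (by simp)
  -- choose near-optimal truncated admissible functions
  have hex : ∀ j, ∃ g : EuclideanSpace ℝ (Fin d) → ℝ, Measurable g ∧ (∀ x, 0 ≤ g x) ∧
      (∀ x, g x ≤ 1) ∧ E j ⊆ interior {x | 1 ≤ g x} ∧ memW d p ν g ∧
      Gc d p ν c₁ c₂ g < capGen d p ν c₁ c₂ (E j) + εseq j := by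
    intro j
    have hlt : capGen d p ν c₁ c₂ (E j) < capGen d p ν c₁ c₂ (E j) + εseq j :=
      ENNReal.lt_add_right (hcapne j) (hεseq0 j)
    rw [capGen] at hlt
    obtain ⟨f, hf⟩ := iInf_lt_iff.mp hlt
    obtain ⟨hAdm, hflt⟩ := iInf_lt_iff.mp hf
    have hfm : Measurable f := hAdm.1.1
    refine ⟨clampF f, clampF_meas hfm, clampF_nonneg f, clampF_le_one f, ?_, ?_, ?_⟩
    · have : {x | 1 ≤ clampF f x} = {x | 1 ≤ f x} := by
        ext x
        exact one_le_clampF x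
      rw [this]
      exact hAdm.2
    · have hab := (memW_iff hp hfm).mp hAdm.1
      refine (memW_iff hp (clampF_meas hfm)).mpr
        ⟨(AA_clampF_le hp0.le f).trans_lt hab.1, (BB_clampF_le hp0.le f).trans_lt hab.2⟩
    · exact (Gc_clampF_le hp0.le c₁ c₂ f).trans_lt hflt
  choose g hgm hg0 hg1 hgsub hgW hgGc using hex
  -- increasing maxima
  set H : ℕ → EuclideanSpace ℝ (Fin d) → ℝ :=
    fun n => Nat.rec (g 0) (fun n Hn => fun x => max (Hn x) (g (n+1) x)) n with hHdef
  have hH0 : H 0 = g 0 := rfl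
  have hHsucc : ∀ n, H (n+1) = fun x => max (H n x) (g (n+1) x) := fun n => rfl
  have hHmeas : ∀ n, Measurable (H n) := by
    intro n
    induction n with
    | zero => exact hgm 0
    | succ n ih => exact ih.max (hgm (n+1))
  have hHnonneg : ∀ n x, 0 ≤ H n x := by
    intro n
    induction n with
    | zero => exact hg0 0
    | succ n ih => exact fun x => le_trans (ih x) (le_max_left _ _)
  have hHle1 : ∀ n x, H n x ≤ 1 := by
    intro n
    induction n with
    | zero => exact hg1 0
    | succ n ih => exact fun x => max_le (ih x) (hg1 (n+1) x)
  have hHmono : ∀ n x, H n x ≤ H (n+1) x := fun n x => le_max_left _ _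
  have hHsub : ∀ n, E n ⊆ interior {x | 1 ≤ H n x} := by
    intro n
    induction n with
    | zero => exact hgsub 0
    | succ n ih =>
      refine (hgsub (n+1)).trans (interior_mono ?_)
      intro x hx
      exact Set.mem_setOf.mpr (le_trans (Set.mem_setOf.mp hx) (le_max_right (H n x) (g (n+1) x)))
  -- partial sums of epsilons
  set psum : ℕ → ℝ≥0∞ := fun n => ∑ j ∈ Finset.range (n+1), εseq j with hpsum
  have hpsum_le : ∀ n, psum n ≤ (ε : ℝ≥0∞) := by
    intro n
    have h1 : psum n = (ε : ℝ≥0∞) * ∑ j ∈ Finset.range (n+1), 2⁻¹ ^ (j+1) := by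
      rw [hpsum, Finset.mul_sum]
    rw [h1]
    have h2 : ∑ j ∈ Finset.range (n+1), (2⁻¹ : ℝ≥0∞) ^ (j+1) ≤
        ∑' j : ℕ, (2⁻¹ : ℝ≥0∞) ^ (j+1) :=
      ENNReal.sum_le_tsum (f := fun j : ℕ => (2⁻¹ : ℝ≥0∞) ^ (j+1)) (Finset.range (n+1))
    have h3 : ∑' j : ℕ, (2⁻¹ : ℝ≥0∞) ^ (j+1) = 1 := by
      rw [ENNReal.tsum_geometric_add_one]
      rw [ENNReal.one_sub_inv_two, inv_inv]
      exact ENNReal.inv_mul_cancel (a := 2) (by simp) (by simp)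
    calc (ε : ℝ≥0∞) * ∑ j ∈ Finset.range (n+1), 2⁻¹ ^ (j+1)
        ≤ (ε : ℝ≥0∞) * 1 := mul_le_mul_right (h3 ▸ h2) _
      _ = ε := mul_one _
  -- the key induction
  have hHGc : ∀ n, Gc d p ν c₁ c₂ (H n) ≤ capGen d p ν c₁ c₂ (E n) + psum n := by
    intro n
    induction n with
    | zero =>
      refine (hgGc 0).le.trans ?_
      simp [hpsum]
    | succ n ih =>
      have hGHn_lt : Gc d p ν c₁ c₂ (H n) < ⊤ :=
        ih.trans_lt (ENNReal.add_lt_top.mpr ⟨(hcaple n).trans_lt hS,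
          (hpsum_le n).trans_lt ENNReal.coe_lt_top⟩)
      have hGg_lt : Gc d p ν c₁ c₂ (g (n+1)) < ⊤ :=
        (hgGc (n+1)).trans (ENNReal.add_lt_top.mpr ⟨(hcaple (n+1)).trans_lt hS,
          ENNReal.mul_lt_top ENNReal.coe_lt_top (ENNReal.pow_lt_top (by simp : (2⁻¹ : ℝ≥0∞) < ⊤))⟩)
      set m : EuclideanSpace ℝ (Fin d) → ℝ := fun x => min (H n x) (g (n+1) x) with hmdef
      have hsubmod := Gc_submod (ν := ν) hp c₁ c₂ (hHmeas n) (hgm (n+1))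
      have hGm_lt : Gc d p ν c₁ c₂ m < ⊤ := by
        refine lt_of_le_of_lt ?_ (ENNReal.add_lt_top.mpr ⟨hGHn_lt, hGg_lt⟩)
        exact le_trans le_add_self hsubmod
      have hmW : memW d p ν m := by
        have hmm : Measurable m := (hHmeas n).min (hgm (n+1))
        obtain ⟨hA, hB⟩ := AB_lt_top_of_Gc hc₁ hc₂ hGm_lt
        exact (memW_iff hp hmm).mpr ⟨hA, hB⟩
      have hmsub : E n ⊆ interior {x | 1 ≤ m x} := by
        have : {x | 1 ≤ m x} = {x | 1 ≤ H n x} ∩ {x | 1 ≤ g (n+1) x} := by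
          ext x
          simp [hmdef, le_min_iff]
        rw [this, interior_inter]
        exact subset_inter (hHsub n) ((hinc (Nat.le_succ n)).trans (hgsub (n+1)))
      have hcapm : capGen d p ν c₁ c₂ (E n) ≤ Gc d p ν c₁ c₂ m :=
        iInf₂_le m ⟨hmW, hmsub⟩
      -- cancel capGen (E n)
      have hchain : Gc d p ν c₁ c₂ (H (n+1)) + capGen d p ν c₁ c₂ (E n) ≤
          capGen d p ν c₁ c₂ (E n) + (capGen d p ν c₁ c₂ (E (n+1)) + psum (n+1)) := by
        calc Gc d p ν c₁ c₂ (H (n+1)) + capGen d p ν c₁ c₂ (E n)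
            ≤ Gc d p ν c₁ c₂ (H (n+1)) + Gc d p ν c₁ c₂ m := add_le_add_right hcapm _
          _ ≤ Gc d p ν c₁ c₂ (H n) + Gc d p ν c₁ c₂ (g (n+1)) := hsubmod
          _ ≤ (capGen d p ν c₁ c₂ (E n) + psum n) +
              (capGen d p ν c₁ c₂ (E (n+1)) + εseq (n+1)) := add_le_add ih (hgGc (n+1)).le
          _ = capGen d p ν c₁ c₂ (E n) + (capGen d p ν c₁ c₂ (E (n+1)) + psum (n+1)) := by
              have hps : psum (n+1) = psum n + εseq (n+1) := by
                simp only [hpsum]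
                rw [Finset.sum_range_succ]
              rw [hps]
              ring
      rw [add_comm (Gc d p ν c₁ c₂ (H (n+1)))] at hchain
      exact (ENNReal.add_le_add_iff_left (hcapne n)).mp hchain
  -- pass to the limit
  set h : EuclideanSpace ℝ (Fin d) → ℝ := fun x => ⨆ n, H n x with hhdef
  have hbdd : ∀ x, BddAbove (Set.range fun n => H n x) := by
    intro x
    refine ⟨1, ?_⟩
    rintro y ⟨n, rfl⟩
    exact hHle1 n x
  have hmonox : ∀ x, Monotone fun n => H n x := fun x =>
    monotone_nat_of_le_succ fun n => hHmono n x
  have hHleh : ∀ n x, H n x ≤ h x := fun n x => le_ciSup (hbdd x) n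
  have htendsto : ∀ x, Filter.Tendsto (fun n => H n x) Filter.atTop (nhds (h x)) :=
    fun x => tendsto_atTop_ciSup (hmonox x) (hbdd x)
  have hhmeas : Measurable h := Measurable.iSup hHmeas
  have hcont : Continuous fun r : ℝ => ENNReal.ofReal (|r| ^ p) :=
    ENNReal.continuous_ofReal.comp ((Real.continuous_rpow_const hp0.le).comp continuous_abs)
  -- Fatou for AA
  have hAAh : AA d p h ≤ Filter.liminf (fun n => AA d p (H n)) Filter.atTop := by
    have heq : ∀ x, ENNReal.ofReal (|h x| ^ p) =
        Filter.liminf (fun n => ENNReal.ofReal (|H n x| ^ p)) Filter.atTop := by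
      intro x
      exact ((hcont.tendsto (h x)).comp (htendsto x)).liminf_eq.symm
    calc AA d p h = ∫⁻ x, Filter.liminf (fun n => ENNReal.ofReal (|H n x| ^ p))
          Filter.atTop := by
          unfold AA
          exact lintegral_congr heq
      _ ≤ Filter.liminf (fun n => AA d p (H n)) Filter.atTop :=
          lintegral_liminf_le fun n => meas_ofReal_rpow hp0.le (hHmeas n)
  -- Fatou for BB
  have hBBh : BB d p ν h ≤ Filter.liminf (fun n => BB d p ν (H n)) Filter.atTop := by
    have hstep1 : ∀ hh, (∫⁻ x, ENNReal.ofReal (|h (x + hh) - h x| ^ p)) ≤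
        Filter.liminf (fun n => ∫⁻ x, ENNReal.ofReal (|H n (x + hh) - H n x| ^ p))
          Filter.atTop := by
      intro hh
      have heq : ∀ x, ENNReal.ofReal (|h (x + hh) - h x| ^ p) =
          Filter.liminf (fun n => ENNReal.ofReal (|H n (x + hh) - H n x| ^ p)) Filter.atTop := by
        intro x
        have : Filter.Tendsto (fun n => H n (x + hh) - H n x) Filter.atTop
            (nhds (h (x + hh) - h x)) := (htendsto (x + hh)).sub (htendsto x)
        exact ((hcont.tendsto _).comp this).liminf_eq.symm
      calc (∫⁻ x, ENNReal.ofReal (|h (x + hh) - h x| ^ p))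
          = ∫⁻ x, Filter.liminf
              (fun n => ENNReal.ofReal (|H n (x + hh) - H n x| ^ p)) Filter.atTop :=
            lintegral_congr heq
        _ ≤ _ := lintegral_liminf_le fun n => meas_shift hp0.le (hHmeas n) hh
    calc BB d p ν h ≤ ∫⁻ hh, Filter.liminf
          (fun n => ∫⁻ x, ENNReal.ofReal (|H n (x + hh) - H n x| ^ p)) Filter.atTop ∂ν :=
          lintegral_mono hstep1
      _ ≤ Filter.liminf (fun n => BB d p ν (H n)) Filter.atTop :=
          lintegral_liminf_le fun n => meas_innerB hp0.le (hHmeas n)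
  -- combine
  have hGch : Gc d p ν c₁ c₂ h ≤ S + ε := by
    have h1 : Gc d p ν c₁ c₂ h ≤ Filter.liminf (fun n => Gc d p ν c₁ c₂ (H n))
        Filter.atTop := by
      calc Gc d p ν c₁ c₂ h = c₁ * AA d p h + c₂ * BB d p ν h := rfl
        _ ≤ c₁ * Filter.liminf (fun n => AA d p (H n)) Filter.atTop +
            c₂ * Filter.liminf (fun n => BB d p ν (H n)) Filter.atTop :=
            add_le_add (mul_le_mul_right hAAh _) (mul_le_mul_right hBBh _)
        _ ≤ Filter.liminf (fun n => c₁ * AA d p (H n)) Filter.atTop +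
            Filter.liminf (fun n => c₂ * BB d p ν (H n)) Filter.atTop :=
            add_le_add (const_mul_liminf_le _ _) (const_mul_liminf_le _ _)
        _ ≤ Filter.liminf (fun n => c₁ * AA d p (H n) + c₂ * BB d p ν (H n)) Filter.atTop :=
            liminf_superadd _ _
        _ = _ := rfl
    refine h1.trans ?_
    refine Filter.liminf_le_of_frequently_le (Filter.Frequently.of_forall fun n => ?_)
    exact (hHGc n).trans (add_le_add (hcaple n) (hpsum_le n))
  -- h is admissible for the union
  have hABh := AB_lt_top_of_Gc hc₁ hc₂ (hGch.trans_lt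
    (ENNReal.add_lt_top.mpr ⟨hS, ENNReal.coe_lt_top⟩))
  have hWh : memW d p ν h := (memW_iff hp hhmeas).mpr hABh
  have hsubh : (⋃ j, E j) ⊆ interior {x | 1 ≤ h x} := by
    refine Set.iUnion_subset fun j => (hHsub j).trans (interior_mono ?_)
    intro x hx
    exact le_trans hx (hHleh j x)
  exact (iInf₂_le h ⟨hWh, hsubh⟩).trans hGch

lemma rpow_rpow_inv (hp : p ≠ 0) (X : ℝ≥0∞) : (X ^ (1/p)) ^ p = X := by
  rw [← ENNReal.rpow_mul, one_div_mul_cancel hp, ENNReal.rpow_one]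

lemma AA_le_np (hp : 0 < p) (f : EuclideanSpace ℝ (Fin d) → ℝ) :
    AA d p f ≤ nlNorm d p ν f ^ p := by
  conv_lhs => rw [← rpow_rpow_inv (p := p) hp.ne' (AA d p f)]
  rw [nlNorm_eq]
  exact ENNReal.rpow_le_rpow le_self_add hp.le

lemma BB_le_np (hp : 0 < p) (f : EuclideanSpace ℝ (Fin d) → ℝ) :
    BB d p ν f ≤ nlNorm d p ν f ^ p := by
  conv_lhs => rw [← rpow_rpow_inv (p := p) hp.ne' (BB d p ν f)]
  rw [nlNorm_eq]
  exact ENNReal.rpow_le_rpow le_add_self hp.le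

lemma np_eq_ofReal (hp : 0 < p) {f : EuclideanSpace ℝ (Fin d) → ℝ}
    (hA : AA d p f ≠ ⊤) (hB : BB d p ν f ≠ ⊤) :
    nlNorm d p ν f ^ p =
      ENNReal.ofReal (((AA d p f).toReal ^ (1/p) + (BB d p ν f).toReal ^ (1/p)) ^ p) := by
  have h1p : (0:ℝ) ≤ 1/p := by positivity
  rw [nlNorm_eq, ← ENNReal.ofReal_rpow_of_nonneg (by positivity) hp.le,
    ENNReal.ofReal_add (by positivity) (by positivity),
    ← ENNReal.ofReal_rpow_of_nonneg ENNReal.toReal_nonneg h1p,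
    ← ENNReal.ofReal_rpow_of_nonneg ENNReal.toReal_nonneg h1p,
    ENNReal.ofReal_toReal hA, ENNReal.ofReal_toReal hB]

lemma iSup_comp_strictMono {u : ℕ → ℝ≥0∞} (hu : Monotone u) {σ : ℕ → ℕ} (hσ : StrictMono σ) :
    ⨆ j, u j = ⨆ k, u (σ k) :=
  le_antisymm (iSup_le fun j => le_iSup_of_le j (hu hσ.le_apply))
    (iSup_le fun k => le_iSup_of_le (σ k) le_rfl)

lemma opt_identity (hp : 1 ≤ p) {x y : ℝ} (hx : 0 < x) (hy : 0 < y) :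
    coefP p (x ^ (1/p) / (x ^ (1/p) + y ^ (1/p))) * ENNReal.ofReal x +
      coefP p (1 - x ^ (1/p) / (x ^ (1/p) + y ^ (1/p))) * ENNReal.ofReal y =
      ENNReal.ofReal ((x ^ (1/p) + y ^ (1/p)) ^ p) := by
  have hp0 : (0:ℝ) < p := by linarith
  set α := x ^ (1/p) with hα
  set β := y ^ (1/p) with hβ
  have hαpos : 0 < α := Real.rpow_pos_of_pos hx _
  have hβpos : 0 < β := Real.rpow_pos_of_pos hy _
  have hspos : 0 < α + β := by linarith
  have ht : 1 - α / (α + β) = β / (α + β) := by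
    field_simp
    ring
  rw [ht]
  have key : ∀ γ z : ℝ, 0 < γ → 0 < z → γ = z ^ (1/p) →
      (γ / (α + β)) ^ (1-p) * z = γ * (α + β) ^ (p-1) := by
    intro γ z hγ hz hγz
    have hzγ : z = γ ^ p := by
      rw [hγz, ← Real.rpow_mul hz.le, one_div_mul_cancel hp0.ne', Real.rpow_one]
    rw [Real.div_rpow hγ.le hspos.le, hzγ, div_mul_eq_mul_div, ← Real.rpow_add hγ,
      show (1:ℝ) - p + p = 1 by ring, Real.rpow_one, div_eq_mul_inv,
      ← Real.rpow_neg hspos.le, show -((1:ℝ)-p) = p - 1 by ring]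
  have htαpos : 0 < α / (α + β) := div_pos hαpos hspos
  have htβpos : 0 < β / (α + β) := div_pos hβpos hspos
  calc coefP p (α / (α + β)) * ENNReal.ofReal x + coefP p (β / (α + β)) * ENNReal.ofReal y
      = ENNReal.ofReal ((α / (α + β)) ^ (1-p)) * ENNReal.ofReal x +
        ENNReal.ofReal ((β / (α + β)) ^ (1-p)) * ENNReal.ofReal y := by
        rw [coefP, coefP, ENNReal.ofReal_rpow_of_pos htαpos, ENNReal.ofReal_rpow_of_pos htβpos]
    _ = ENNReal.ofReal ((α / (α + β)) ^ (1-p) * x) +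
        ENNReal.ofReal ((β / (α + β)) ^ (1-p) * y) := by
        rw [← ENNReal.ofReal_mul (by positivity), ← ENNReal.ofReal_mul (by positivity)]
    _ = ENNReal.ofReal (α * (α + β) ^ (p-1)) + ENNReal.ofReal (β * (α + β) ^ (p-1)) := by
        rw [key α x hαpos hx hα, key β y hβpos hy hβ]
    _ = ENNReal.ofReal ((α + β) ^ p) := by
        rw [← ENNReal.ofReal_add (by positivity) (by positivity)]
        congr 1
        rw [show p = 1 + (p - 1) by ring, Real.rpow_add hspos, Real.rpow_one]
        ring

theorem capNu_iUnion_le (hp : 1 ≤ p)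
    (E : ℕ → Set (EuclideanSpace ℝ (Fin d))) (hinc : Monotone E) :
    capNu d p ν (⋃ j, E j) ≤ ⨆ j, capNu d p ν (E j) := by
  have hp0 : (0:ℝ) < p := by linarith
  have h1p0 : (0:ℝ) ≤ 1/p := by positivity
  set L := ⨆ j, capNu d p ν (E j) with hLdef
  refine ENNReal.le_of_forall_pos_le_add fun ε hε hL => ?_
  have hLne : L ≠ ⊤ := hL.ne
  have hLεne : L + (ε:ℝ≥0∞) ≠ ⊤ := ENNReal.add_ne_top.mpr ⟨hLne, ENNReal.coe_ne_top⟩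
  have hex : ∀ j, ∃ f, Adm d p ν (E j) f ∧ nlNorm d p ν f ^ p < L + ε := by
    intro j
    have h1 : capNu d p ν (E j) < L + ε :=
      lt_of_le_of_lt (hLdef ▸ le_iSup (fun j => capNu d p ν (E j)) j)
        (ENNReal.lt_add_right hLne (by exact_mod_cast hε.ne'))
    rw [capNu_eq_inf] at h1
    obtain ⟨f, hf⟩ := iInf_lt_iff.mp h1
    obtain ⟨hAdm, hlt⟩ := iInf_lt_iff.mp hf
    exact ⟨f, hAdm, hlt⟩
  choose f hfAdm hfval using hex
  have hABfin : ∀ j, AA d p (f j) ≠ ⊤ ∧ BB d p ν (f j) ≠ ⊤ := by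
    intro j
    have h := (memW_iff hp (hfAdm j).1.1).mp (hfAdm j).1
    exact ⟨h.1.ne, h.2.ne⟩
  set a : ℕ → ℝ := fun j => (AA d p (f j)).toReal with hadef
  set b : ℕ → ℝ := fun j => (BB d p ν (f j)).toReal with hbdef
  set M : ℝ := (L + ε).toReal with hMdef
  have ha_mem : ∀ j, a j ∈ Set.Icc (0:ℝ) M :=
    fun j => ⟨ENNReal.toReal_nonneg,
      ENNReal.toReal_mono hLεne ((AA_le_np hp0 (f j)).trans (hfval j).le)⟩
  have hb_mem : ∀ j, b j ∈ Set.Icc (0:ℝ) M :=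
    fun j => ⟨ENNReal.toReal_nonneg,
      ENNReal.toReal_mono hLεne ((BB_le_np hp0 (f j)).trans (hfval j).le)⟩
  obtain ⟨astar, hastar, φ₁, hφ₁, ha1⟩ :=
    tendsto_subseq_of_bounded (Metric.isBounded_Icc (0:ℝ) M) ha_mem
  obtain ⟨bstar, hbstar, φ₂, hφ₂, hb2⟩ :=
    tendsto_subseq_of_bounded (Metric.isBounded_Icc (0:ℝ) M) (fun k => hb_mem (φ₁ k))
  set σ : ℕ → ℕ := fun k => φ₁ (φ₂ k) with hσdef
  have hσ : StrictMono σ := hφ₁.comp hφ₂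
  have ha : Filter.Tendsto (fun k => a (σ k)) Filter.atTop (nhds astar) :=
    ha1.comp hφ₂.tendsto_atTop
  have hb : Filter.Tendsto (fun k => b (σ k)) Filter.atTop (nhds bstar) := hb2
  have hastar0 : 0 ≤ astar := (isClosed_Icc.closure_subset hastar).1
  have hbstar0 : 0 ≤ bstar := (isClosed_Icc.closure_subset hbstar).1
  -- main bound for each positive δ
  have hmain : ∀ δ : ℝ, 0 < δ → capNu d p ν (⋃ j, E j) ≤
      ENNReal.ofReal (((astar + δ) ^ (1/p) + (bstar + δ) ^ (1/p)) ^ p) := by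
    intro δ hδ
    have hx : 0 < astar + δ := by linarith
    have hy : 0 < bstar + δ := by linarith
    set α := (astar + δ) ^ (1/p) with hαdef
    set β := (bstar + δ) ^ (1/p) with hβdef
    have hαpos : 0 < α := Real.rpow_pos_of_pos hx _
    have hβpos : 0 < β := Real.rpow_pos_of_pos hy _
    have hspos : 0 < α + β := by linarith
    set t : ℝ := α / (α + β) with htdef
    have htpos : 0 < t := div_pos hαpos hspos
    have ht1' : 1 - t = β / (α + β) := by
      rw [htdef]
      field_simp
      ring
    have ht1pos : 0 < 1 - t := by rw [ht1']; positivity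
    have ht0 : 0 ≤ t := htpos.le
    have ht1 : t ≤ 1 := by linarith
    set c₁ := coefP p t with hc₁def
    set c₂ := coefP p (1 - t) with hc₂def
    have hc₁0 : c₁ ≠ 0 := coefP_ne_zero hp t
    have hc₂0 : c₂ ≠ 0 := coefP_ne_zero hp (1 - t)
    have hc₁eq : c₁ = ENNReal.ofReal (t ^ (1-p)) := ENNReal.ofReal_rpow_of_pos htpos
    have hc₂eq : c₂ = ENNReal.ofReal ((1-t) ^ (1-p)) := ENNReal.ofReal_rpow_of_pos ht1pos
    have hc₁top : c₁ ≠ ⊤ := by rw [hc₁eq]; exact ENNReal.ofReal_ne_top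
    have hc₂top : c₂ ≠ ⊤ := by rw [hc₂eq]; exact ENNReal.ofReal_ne_top
    -- the limit value bound
    have hval : (⨆ k, capGen d p ν c₁ c₂ (E (σ k))) ≤
        c₁ * ENNReal.ofReal astar + c₂ * ENNReal.ofReal bstar := by
      have hmono : Monotone fun k => capGen d p ν c₁ c₂ (E (σ k)) :=
        fun i j hij => capGen_mono _ _ (hinc (hσ.monotone hij))
      have hle : ∀ k, capGen d p ν c₁ c₂ (E (σ k)) ≤
          c₁ * AA d p (f (σ k)) + c₂ * BB d p ν (f (σ k)) :=
        fun k => iInf₂_le (f (σ k)) (hfAdm (σ k))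
      have hAten : Filter.Tendsto (fun k => c₁ * AA d p (f (σ k))) Filter.atTop
          (nhds (c₁ * ENNReal.ofReal astar)) := by
        have h1 : Filter.Tendsto (fun k => AA d p (f (σ k))) Filter.atTop
            (nhds (ENNReal.ofReal astar)) := by
          have he : (fun k => AA d p (f (σ k))) = fun k => ENNReal.ofReal (a (σ k)) :=
            funext fun k => (ENNReal.ofReal_toReal (hABfin (σ k)).1).symm
          rw [he]
          exact (ENNReal.continuous_ofReal.tendsto astar).comp ha
        exact ENNReal.Tendsto.const_mul h1 (Or.inr hc₁top)
      have hBten : Filter.Tendsto (fun k => c₂ * BB d p ν (f (σ k))) Filter.atTop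
          (nhds (c₂ * ENNReal.ofReal bstar)) := by
        have h1 : Filter.Tendsto (fun k => BB d p ν (f (σ k))) Filter.atTop
            (nhds (ENNReal.ofReal bstar)) := by
          have he : (fun k => BB d p ν (f (σ k))) = fun k => ENNReal.ofReal (b (σ k)) :=
            funext fun k => (ENNReal.ofReal_toReal (hABfin (σ k)).2).symm
          rw [he]
          exact (ENNReal.continuous_ofReal.tendsto bstar).comp hb
        exact ENNReal.Tendsto.const_mul h1 (Or.inr hc₂top)
      calc (⨆ k, capGen d p ν c₁ c₂ (E (σ k)))
          = Filter.liminf (fun k => capGen d p ν c₁ c₂ (E (σ k))) Filter.atTop :=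
            (Filter.Tendsto.liminf_eq (tendsto_atTop_iSup hmono)).symm
        _ ≤ Filter.liminf (fun k => c₁ * AA d p (f (σ k)) + c₂ * BB d p ν (f (σ k)))
              Filter.atTop := Filter.liminf_le_liminf (Filter.Eventually.of_forall hle)
        _ = c₁ * ENNReal.ofReal astar + c₂ * ENNReal.ofReal bstar :=
            Filter.Tendsto.liminf_eq (hAten.add hBten)
    calc capNu d p ν (⋃ j, E j)
        ≤ capGen d p ν c₁ c₂ (⋃ j, E j) := by
          rw [capNu_eq_inf, capGen]
          exact le_iInf₂ fun f' hf' =>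
            le_trans (iInf₂_le (α := ℝ≥0∞) f' hf') (np_le_G hp ht0 ht1 f')
      _ ≤ ⨆ j, capGen d p ν c₁ c₂ (E j) := capGen_iUnion_le hp hc₁0 hc₂0 E hinc
      _ = ⨆ k, capGen d p ν c₁ c₂ (E (σ k)) :=
          iSup_comp_strictMono (fun i j hij => capGen_mono _ _ (hinc hij)) hσ
      _ ≤ c₁ * ENNReal.ofReal astar + c₂ * ENNReal.ofReal bstar := hval
      _ ≤ c₁ * ENNReal.ofReal (astar + δ) + c₂ * ENNReal.ofReal (bstar + δ) :=
          add_le_add (mul_le_mul_right (ENNReal.ofReal_le_ofReal (by linarith)) c₁)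
            (mul_le_mul_right (ENNReal.ofReal_le_ofReal (by linarith)) c₂)
      _ = ENNReal.ofReal ((α + β) ^ p) := opt_identity hp hx hy
  -- let δ → 0
  have hδseq : Filter.Tendsto (fun m : ℕ => 1 / ((m:ℝ) + 1)) Filter.atTop (nhds 0) :=
    tendsto_one_div_add_atTop_nhds_zero_nat
  have hcont : Filter.Tendsto (fun m : ℕ =>
      ENNReal.ofReal (((astar + 1/((m:ℝ)+1)) ^ (1/p) + (bstar + 1/((m:ℝ)+1)) ^ (1/p)) ^ p))
      Filter.atTop (nhds (ENNReal.ofReal ((astar ^ (1/p) + bstar ^ (1/p)) ^ p))) := by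
    have h1 : Filter.Tendsto (fun m : ℕ => astar + 1/((m:ℝ)+1)) Filter.atTop (nhds astar) := by
      simpa using tendsto_const_nhds.add hδseq
    have h2 : Filter.Tendsto (fun m : ℕ => bstar + 1/((m:ℝ)+1)) Filter.atTop (nhds bstar) := by
      simpa using tendsto_const_nhds.add hδseq
    have h3 := (h1.rpow_const (Or.inr h1p0)).add (h2.rpow_const (Or.inr h1p0))
    exact (ENNReal.continuous_ofReal.tendsto _).comp (h3.rpow_const (Or.inr hp0.le))
  have hle_lim : capNu d p ν (⋃ j, E j) ≤
      ENNReal.ofReal ((astar ^ (1/p) + bstar ^ (1/p)) ^ p) :=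
    ge_of_tendsto hcont (Filter.Eventually.of_forall fun m => hmain _ (by positivity))
  refine hle_lim.trans ?_
  have hNk : ∀ k, ENNReal.ofReal ((a (σ k) ^ (1/p) + b (σ k) ^ (1/p)) ^ p) ≤ L + ε := by
    intro k
    rw [← np_eq_ofReal hp0 (hABfin (σ k)).1 (hABfin (σ k)).2]
    exact (hfval (σ k)).le
  have hNten : Filter.Tendsto
      (fun k => ENNReal.ofReal ((a (σ k) ^ (1/p) + b (σ k) ^ (1/p)) ^ p)) Filter.atTop
      (nhds (ENNReal.ofReal ((astar ^ (1/p) + bstar ^ (1/p)) ^ p))) := by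
    have h3 := (ha.rpow_const (Or.inr h1p0)).add (hb.rpow_const (Or.inr h1p0))
    exact (ENNReal.continuous_ofReal.tendsto _).comp (h3.rpow_const (Or.inr hp0.le))
  exact le_of_tendsto hNten (Filter.Eventually.of_forall hNk)


end Cap

/-- Lower semi-continuity of the nonlocal capacity on increasing sequences of
sets. -/
theorem statement_6 (d : ℕ) (hd : 1 ≤ d) (p : ℝ) (hp1 : 1 ≤ p)
    (ν : Measure (EuclideanSpace ℝ (Fin d)))
    (hint : ∫⁻ x, ENNReal.ofReal (min 1 (‖x‖ ^ p)) ∂ν < ⊤)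
    (E : ℕ → Set (EuclideanSpace ℝ (Fin d))) (hinc : Monotone E) :
    Tendsto (fun j => capNu d p ν (E j)) atTop (𝓝 (capNu d p ν (⋃ j, E j))) := by
  have hmono : Monotone fun j => capNu d p ν (E j) :=
    fun i j hij => capNu_mono (hinc hij)
  have hkey : capNu d p ν (⋃ j, E j) = ⨆ j, capNu d p ν (E j) :=
    le_antisymm (capNu_iUnion_le hp1 E hinc)
      (iSup_le fun j => capNu_mono (Set.subset_iUnion E j))
  rw [hkey]
  exact tendsto_atTop_iSup hmono
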